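/- Let N = E₁₂ + E₂₃ ∈ M₃(ℂ), let 𝔅 = {λ·1 + μ·N + ν·N² : λ, μ, ν ∈ ℂ}, and define δ : 𝔅 → 𝔅 by δ(λ·1 + μ·N + ν·N²) = ν·N². Then δ is a local derivation: for every X ∈ 𝔅 there exists a derivation d of 𝔅 (a linear map d : 𝔅 → 𝔅 with d(YZ) = d(Y)Z + Y d(Z) for all Y, Z ∈ 𝔅) such that δ(X) = d(X). -/

import Mathlib

def Nmat : Matrix (Fin 3) (Fin 3) ℂ :=
  Matrix.single 0 1 1 + Matrix.single 1 2 1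

def frakB : Set (Matrix (Fin 3) (Fin 3) ℂ) :=
  {M | ∃ lam mu nu : ℂ, M = lam • 1 + mu • Nmat + nu • Nmat ^ 2}

noncomputable def Dmap (a b : ℂ) :
    Matrix (Fin 3) (Fin 3) ℂ →ₗ[ℂ] Matrix (Fin 3) (Fin 3) ℂ where
  toFun M := M 0 1 • (a • Nmat + b • Nmat ^ 2) + M 0 2 • ((2 * a) • Nmat ^ 2)
  map_add' X Y := by
    simp [Matrix.add_apply, add_smul]; abel
  map_smul' c X := by
    simp [Matrix.smul_apply, smul_smul, smul_add, mul_assoc]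

lemma Dmap_apply (a b : ℂ) (M : Matrix (Fin 3) (Fin 3) ℂ) :
    Dmap a b M = M 0 1 • (a • Nmat + b • Nmat ^ 2) + M 0 2 • ((2 * a) • Nmat ^ 2) := rfl

lemma gen_apply (lam mu nu : ℂ) :
    (lam • 1 + mu • Nmat + nu • Nmat ^ 2 : Matrix (Fin 3) (Fin 3) ℂ) 0 1 = mu ∧
    (lam • 1 + mu • Nmat + nu • Nmat ^ 2 : Matrix (Fin 3) (Fin 3) ℂ) 0 2 = nu := by
  constructor <;>
  simp [Nmat, Matrix.single, Matrix.add_apply, Matrix.smul_apply, Matrix.one_apply,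
    pow_two, Matrix.mul_apply, Fin.sum_univ_three, Matrix.of_apply]

lemma mul_gen (l m n l' m' n' : ℂ) :
    (l • 1 + m • Nmat + n • Nmat ^ 2) * (l' • 1 + m' • Nmat + n' • Nmat ^ 2)
      = (l * l') • 1 + (l * m' + m * l') • Nmat + (l * n' + m * m' + n * l') • Nmat ^ 2 := by
  ext i j
  fin_cases i <;> fin_cases j <;>
    simp [Nmat, Matrix.single, Matrix.add_apply, Matrix.smul_apply, Matrix.one_apply,
      pow_two, Matrix.mul_apply, Fin.sum_univ_three, Matrix.of_apply] <;> try ring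

lemma Dmap_gen (a b l m n : ℂ) :
    Dmap a b (l • 1 + m • Nmat + n • Nmat ^ 2)
      = (m * a) • Nmat + (m * b + n * (2 * a)) • Nmat ^ 2 := by
  rw [Dmap_apply, (gen_apply l m n).1, (gen_apply l m n).2]
  module

theorem delta_is_local_derivation :
    ∀ lam mu nu : ℂ,
      ∃ d : Matrix (Fin 3) (Fin 3) ℂ →ₗ[ℂ] Matrix (Fin 3) (Fin 3) ℂ,
        Set.MapsTo d frakB frakB ∧
        (∀ Y ∈ frakB, ∀ Z ∈ frakB, d (Y * Z) = d Y * Z + Y * d Z) ∧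
        d (lam • 1 + mu • Nmat + nu • Nmat ^ 2) = nu • Nmat ^ 2 := by
  intro lam mu nu
  -- choose parameters a, b depending on whether mu = 0
  obtain ⟨a, b, hab⟩ : ∃ a b : ℂ, mu * a = 0 ∧ mu * b + nu * (2 * a) = nu := by
    by_cases h : mu = 0
    · exact ⟨1 / 2, 0, by simp [h], by simp [h]; try ring⟩
    · exact ⟨0, nu / mu, by simp, by field_simp; ring⟩
  refine ⟨Dmap a b, ?_, ?_, ?_⟩
  · rintro M ⟨l, m, n, rfl⟩
    rw [Dmap_gen]
    exact ⟨0, m * a, m * b + n * (2 * a), by simp⟩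
  · rintro Y ⟨l, m, n, rfl⟩ Z ⟨l', m', n', rfl⟩
    rw [mul_gen, Dmap_gen, Dmap_gen, Dmap_gen]
    have h1 : ((m * a) • Nmat + (m * b + n * (2 * a)) • Nmat ^ 2)
        * (l' • 1 + m' • Nmat + n' • Nmat ^ 2)
        = ((0 : ℂ) • 1 + (m * a) • Nmat + (m * b + n * (2 * a)) • Nmat ^ 2)
          * (l' • 1 + m' • Nmat + n' • Nmat ^ 2) := by rw [zero_smul, zero_add]
    have h2 : (l • 1 + m • Nmat + n • Nmat ^ 2)
        * ((m' * a) • Nmat + (m' * b + n' * (2 * a)) • Nmat ^ 2)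
        = (l • 1 + m • Nmat + n • Nmat ^ 2)
          * ((0 : ℂ) • 1 + (m' * a) • Nmat + (m' * b + n' * (2 * a)) • Nmat ^ 2) := by
      rw [zero_smul, zero_add]
    rw [h1, h2, mul_gen, mul_gen]
    ext i j
    fin_cases i <;> fin_cases j <;>
      simp [Nmat, Matrix.single, Matrix.add_apply, Matrix.smul_apply, Matrix.one_apply,
        pow_two, Matrix.mul_apply, Fin.sum_univ_three, Matrix.of_apply] <;> try ring
  · rw [Dmap_gen, hab.1, hab.2, zero_smul, zero_add]
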